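/- Let N ≥ 3. Let Δ_D be the N×N Dirichlet difference Laplacian ((Δ_D f)(k) = f(k−1) − 2f(k) + f(k+1) for 1 ≤ k ≤ N−2, (Δ_D f)(0) = −3f(0) + f(1), (Δ_D f)(N−1) = f(N−2) − 3f(N−1)) and let Δ_L be the periodic difference Laplacian ((Δ_L f)(x) = f((x−1) mod N) − 2f(x) + f((x+1) mod N)). Let Q₀ be the orthogonal projection of ℂ^N onto the span of the unit vector x₀ = (e₀ + e_{N−1})/√2, where e_j is the standard basis. Then the boundary perturbation operator satisfies Δ_D − Δ_L = −2 Q₀, and consequently for every real t, exp((t/2)(Δ_D − Δ_L)) = I + (e^{−t} − 1) Q₀. -/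

import Mathlib

open scoped Matrix Nat

lemma exp_smul_idem' {n : ℕ} (Q : Matrix (Fin n) (Fin n) ℂ) (hQ : Q * Q = Q) (c : ℂ) :
    NormedSpace.exp (c • Q) = 1 + (Complex.exp c - 1) • Q := by
  letI : SeminormedRing (Matrix (Fin n) (Fin n) ℂ) := Matrix.linftyOpSemiNormedRing
  letI : NormedRing (Matrix (Fin n) (Fin n) ℂ) := Matrix.linftyOpNormedRing
  letI : NormedAlgebra ℂ (Matrix (Fin n) (Fin n) ℂ) := Matrix.linftyOpNormedAlgebra
  have hpow : ∀ m : ℕ, Q ^ (m + 1) = Q := by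
    intro m
    induction m with
    | zero => simp
    | succ m ih => rw [pow_succ, ih, hQ]
  have hsum : Summable (fun m : ℕ => ((m ! : ℂ))⁻¹ • (c • Q) ^ m) :=
    NormedSpace.expSeries_summable' (𝕂 := ℂ) (c • Q)
  have hsc : Summable (fun m : ℕ => ((m ! : ℂ))⁻¹ * c ^ m) := by
    have h := NormedSpace.expSeries_summable' (𝕂 := ℂ) (𝔸 := ℂ) c
    simpa only [smul_eq_mul] using h
  have hsc' : Summable (fun m : ℕ => (((m + 1)! : ℂ))⁻¹ * c ^ (m + 1)) :=
    hsc.comp_injective Nat.succ_injective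
  have key : ∀ m : ℕ, ((((m+1)! : ℕ)  : ℂ))⁻¹ • (c • Q) ^ (m + 1)
      = ((((m+1)! : ℂ))⁻¹ * c ^ (m + 1)) • Q := by
    intro m
    rw [smul_pow, hpow, smul_smul]
  rw [NormedSpace.exp_eq_tsum ℂ]
  beta_reduce
  rw [Summable.tsum_eq_zero_add hsum]
  have h2 : ∑' m : ℕ, (((m + 1)! : ℂ))⁻¹ • (c • Q) ^ (m + 1)
      = (∑' m : ℕ, (((m + 1)! : ℂ))⁻¹ * c ^ (m + 1)) • Q := by
    rw [tsum_congr key, hsc'.tsum_smul_const]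
  have h3 : (∑' m : ℕ, (((m + 1)! : ℂ))⁻¹ * c ^ (m + 1)) = Complex.exp c - 1 := by
    have := Summable.tsum_eq_zero_add hsc
    have hexp : Complex.exp c = ∑' m : ℕ, ((m ! : ℂ))⁻¹ * c ^ m := by
      rw [Complex.exp_eq_exp_ℂ, NormedSpace.exp_eq_tsum ℂ]
      simp [smul_eq_mul]
    rw [hexp, this]
    simp
  simp only [h2, h3]
  simp

lemma matrix_eq_of_mulVec' {n : ℕ} (A B : Matrix (Fin n) (Fin n) ℂ)
    (h : ∀ f, A *ᵥ f = B *ᵥ f) : A = B := by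
  ext i j
  have := congrFun (h (Pi.single j 1)) i
  simpa using this

lemma fin_sub_one_val' {N : ℕ} [NeZero N] (hN : 1 < N) (k : Fin N) :
    ((k - 1 : Fin N) : ℕ) = if (k : ℕ) = 0 then N - 1 else (k : ℕ) - 1 := by
  have h1 : ((1 : Fin N) : ℕ) = 1 := by
    simp [Fin.val_one', Nat.mod_eq_of_lt hN]
  have hk := k.isLt
  rw [Fin.sub_def]
  simp only [h1]
  split_ifs with h
  · rw [h]
    simp [Nat.mod_eq_of_lt (show N - 1 < N by omega)]
  · have he : N - 1 + (k : ℕ) = ((k : ℕ) - 1) + N := by omega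
    rw [he, Nat.add_mod_right]
    exact Nat.mod_eq_of_lt (by omega)

lemma fin_add_one_val' {N : ℕ} [NeZero N] (hN : 1 < N) (k : Fin N) :
    ((k + 1 : Fin N) : ℕ) = if (k : ℕ) = N - 1 then 0 else (k : ℕ) + 1 := by
  have h1 : ((1 : Fin N) : ℕ) = 1 := by
    simp [Fin.val_one', Nat.mod_eq_of_lt hN]
  have hk := k.isLt
  rw [Fin.add_def]
  simp only [h1]
  split_ifs with h
  · rw [h]
    simp [Nat.sub_add_cancel (by omega : 1 ≤ N)]
  · exact Nat.mod_eq_of_lt (by omega)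

/-- **The Dirichlet Laplacian as a rank-one perturbation of the periodic one, and the
exponential of the boundary perturbation.** With `Δ_D` the Dirichlet and `Δ_L` the periodic
difference Laplacians, and `Q₀` the orthogonal projection onto the unit vector
`x₀ = (e₀ + e_{N−1})/√2`, one has `Δ_D − Δ_L = −2Q₀`, and consequently
`exp((t/2)(Δ_D − Δ_L)) = I + (e^{−t} − 1)Q₀` for every real `t`. -/
theorem dirichlet_minus_periodic (N : ℕ) (hN : 3 ≤ N) [NeZero N]
    (ΔD ΔL Q : Matrix (Fin N) (Fin N) ℂ) (x₀ : Fin N → ℂ)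
    (hΔD : ∀ f : Fin N → ℂ, ∀ k : Fin N, ΔD.mulVec f k =
      if (k : ℕ) = 0 then -3 * f k + f (k + 1)
      else if (k : ℕ) = N - 1 then f (k - 1) - 3 * f k
      else f (k - 1) - 2 * f k + f (k + 1))
    (hΔL : ∀ f : Fin N → ℂ, ∀ x : Fin N,
      ΔL.mulVec f x = f (x - 1) - 2 * f x + f (x + 1))
    (hx₀ : ∀ j : Fin N, x₀ j =
      ((if (j : ℕ) = 0 then 1 else 0) + (if (j : ℕ) = N - 1 then 1 else 0)) / Real.sqrt 2)
    (hQ : ∀ f : Fin N → ℂ, Q.mulVec f = (∑ j, (starRingEnd ℂ) (x₀ j) * f j) • x₀) :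
    ΔD - ΔL = (-2 : ℂ) • Q ∧
    ∀ t : ℝ, NormedSpace.exp (((t : ℂ) / 2) • (ΔD - ΔL)) =
      1 + ((Real.exp (-t) - 1 : ℝ) : ℂ) • Q := by
  have hN1 : 1 < N := by omega
  have s2 : ((Real.sqrt 2 : ℝ) : ℂ) * ((Real.sqrt 2 : ℝ) : ℂ) = 2 := by
    rw [← Complex.ofReal_mul, Real.mul_self_sqrt (by norm_num)]
    norm_num
  have s2ne : ((Real.sqrt 2 : ℝ) : ℂ) ≠ 0 := by
    intro h
    rw [h] at s2
    simp at s2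
  -- conj of x₀ entries
  have hconj : ∀ j : Fin N, (starRingEnd ℂ) (x₀ j) = x₀ j := by
    intro j
    rw [hx₀ j]
    rw [map_div₀, map_add, Complex.conj_ofReal]
    congr 1
    · split_ifs <;> simp
  -- Part 1
  have h1 : ΔD - ΔL = (-2 : ℂ) • Q := by
    ext k j
    have hD := hΔD (Pi.single j 1 : Fin N → ℂ) k
    have hL := hΔL (Pi.single j 1 : Fin N → ℂ) k
    have hq := congrFun (hQ (Pi.single j 1 : Fin N → ℂ)) k
    rw [Matrix.mulVec_single_one] at hD hL hq
    simp only [Matrix.col_apply] at hD hL hq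
    have hsum : (∑ j', (starRingEnd ℂ) (x₀ j') * (Pi.single j (1:ℂ) : Fin N → ℂ) j') = (starRingEnd ℂ) (x₀ j) := by
      simp [Pi.single_apply, mul_ite, Finset.sum_ite_eq']
    rw [hsum, Pi.smul_apply, smul_eq_mul] at hq
    simp only [Matrix.sub_apply, Matrix.smul_apply, smul_eq_mul]
    rw [hD, hL, hq, hconj j, hx₀ j, hx₀ k]
    by_cases hk0 : (k : ℕ) = 0
    · -- k = 0 : diff = -f k - f (k-1)
      rw [if_pos hk0]
      have hkm : ((k - 1 : Fin N) : ℕ) = N - 1 := by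
        rw [fin_sub_one_val' hN1, if_pos hk0]
      have e1 : (Pi.single j 1 : Fin N → ℂ) k = if (j : ℕ) = 0 then 1 else 0 := by
        rw [Pi.single_apply]
        congr 1
        simp only [Fin.ext_iff, hk0]
        exact propext eq_comm
      have e2 : (Pi.single j 1 : Fin N → ℂ) (k - 1) = if (j : ℕ) = N - 1 then 1 else 0 := by
        rw [Pi.single_apply]
        congr 1
        simp [Fin.ext_iff, hkm, eq_comm]
      rw [e1, e2, if_pos hk0, if_neg (by omega : ¬ (k:ℕ) = N - 1)]
      field_simp
      split_ifs <;> rw [pow_two, s2] <;> ring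
    · rw [if_neg hk0]
      by_cases hkN : (k : ℕ) = N - 1
      · rw [if_pos hkN]
        have hkp : ((k + 1 : Fin N) : ℕ) = 0 := by
          rw [fin_add_one_val' hN1, if_pos hkN]
        have e1 : (Pi.single j 1 : Fin N → ℂ) k = if (j : ℕ) = N - 1 then 1 else 0 := by
          rw [Pi.single_apply]
          congr 1
          simp [Fin.ext_iff, hkN, eq_comm]
        have e2 : (Pi.single j 1 : Fin N → ℂ) (k + 1) = if (j : ℕ) = 0 then 1 else 0 := by
          rw [Pi.single_apply]
          congr 1
          simp only [Fin.ext_iff, hkp]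
          exact propext eq_comm
        rw [e1, e2, if_neg hk0, if_pos hkN]
        field_simp
        split_ifs <;> rw [pow_two, s2] <;> ring
      · rw [if_neg hkN, if_neg hk0, if_neg hkN]
        ring
  refine ⟨h1, ?_⟩
  -- Q is idempotent
  have hnorm : (∑ j, (starRingEnd ℂ) (x₀ j) * x₀ j) = 1 := by
    have hterm : ∀ j : Fin N, (starRingEnd ℂ) (x₀ j) * x₀ j =
        (if (j : ℕ) = 0 then (1:ℂ) else 0) / 2
        + (if (j : ℕ) = N - 1 then (1:ℂ) else 0) / 2 := by
      intro j
      rw [hconj j, hx₀ j]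
      split_ifs with hA hB hB
      · omega
      · rw [add_zero, zero_div, add_zero, div_mul_div_comm, s2, one_mul]
      · rw [zero_add, zero_div, zero_add, div_mul_div_comm, s2, one_mul]
      · simp
    rw [Finset.sum_congr rfl (fun j _ => hterm j), Finset.sum_add_distrib]
    have hs0 : ∑ j : Fin N, (if (j : ℕ) = 0 then (1:ℂ) else 0) / 2 = 1 / 2 := by
      rw [Finset.sum_eq_single (⟨0, by omega⟩ : Fin N)]
      · simp
      · intro b _ hb
        rw [if_neg, zero_div]
        intro hb0
        exact hb (by simp [Fin.ext_iff, hb0])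
      · simp
    have hsN : ∑ j : Fin N, (if (j : ℕ) = N - 1 then (1:ℂ) else 0) / 2 = 1 / 2 := by
      rw [Finset.sum_eq_single (⟨N - 1, by omega⟩ : Fin N)]
      · simp
      · intro b _ hb
        rw [if_neg, zero_div]
        intro hb0
        exact hb (by simp [Fin.ext_iff, hb0])
      · simp
    rw [hs0, hsN]
    norm_num
  have hQQ : Q * Q = Q := by
    apply matrix_eq_of_mulVec'
    intro f
    rw [← Matrix.mulVec_mulVec, hQ f, Matrix.mulVec_smul, hQ x₀, hnorm, one_smul]
  intro t
  rw [h1]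
  have hsm : ((t : ℂ) / 2) • ((-2 : ℂ) • Q) = (-(t : ℂ)) • Q := by
    rw [smul_smul]
    norm_num
  rw [hsm, exp_smul_idem' Q hQQ]
  congr 1
  rw [show ((Real.exp (-t) - 1 : ℝ) : ℂ) = Complex.exp (-(t:ℂ)) - 1 by
    push_cast [Complex.ofReal_exp]
    norm_num]
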